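/- Best-arm identification fails on a random instance: There exists an absolute constant c > 0 with the following property. For every number of arms K ≥ 2, every ε ∈ (0, 1/2), every time horizon T ≤ cK/ε², and every randomized bandit algorithm with prediction (a probability distribution over deterministic bandit algorithms with prediction), if an arm a is drawn uniformly at random from [K] and the algorithm is run on problem instance I_a(ε), then the probability that the algorithm's prediction differs from a is at least 1/12, where the probability is over the choice of a, the rewards, and the algorithm's randomization. -/

import Mathlib

/-- The probability that a deterministic bandit algorithm `A` (with 0/1 rewards and `K` arms),
run on the mean-reward vector `μ`, observes the reward sequence `r : Fin T → Bool`: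
conditionally on the first `t-1` rewards, the reward in round `t` equals `1` with
probability `μ a_t`, where `a_t = A t (prefix of r)`. -/
noncomputable def seqProb {K T : ℕ} (A : (t : Fin T) → (Fin t.1 → Bool) → Fin K)
    (μ : Fin K → ℝ) (r : Fin T → Bool) : ℝ :=
  ∏ t : Fin T,
    if r t then μ (A t fun s => r ⟨s.1, s.2.trans t.2⟩)
    else 1 - μ (A t fun s => r ⟨s.1, s.2.trans t.2⟩)

/-- Problem instance `I_j(ε)`: arm `j` has mean reward `(1+ε)/2`, all other arms `1/2`. -/
noncomputable def instMu (K : ℕ) (j : Fin K) (ε : ℝ) : Fin K → ℝ :=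
  fun i => if i = j then (1 + ε) / 2 else 1 / 2

/-- A deterministic bandit algorithm with prediction: the arm-selection functions,
together with the final prediction `y : {0,1}^T → [K]`. -/
abbrev DetAlgPred (K T : ℕ) :=
  ((t : Fin T) → (Fin t.1 → Bool) → Fin K) × ((Fin T → Bool) → Fin K)

namespace BanditLB
open Finset Real

variable {K : ℕ}

def restrict {T : ℕ} (A : (t : Fin (T+1)) → (Fin t.1 → Bool) → Fin K) :
    (t : Fin T) → (Fin t.1 → Bool) → Fin K :=
  fun t f => A t.castSucc f

lemma seqProb_snoc {T : ℕ} (A : (t : Fin (T+1)) → (Fin t.1 → Bool) → Fin K)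
    (μ : Fin K → ℝ) (r : Fin T → Bool) (b : Bool) :
    seqProb A μ (Fin.snoc r b) =
      seqProb (restrict A) μ r *
        (if b then μ (A (Fin.last T) r) else 1 - μ (A (Fin.last T) r)) := by
  unfold seqProb restrict
  rw [Fin.prod_univ_castSucc]
  congr 1
  · apply Finset.prod_congr rfl
    intro t _
    have h1 : (Fin.snoc r b : Fin (T+1) → Bool) t.castSucc = r t := by simp
    have h2 : (fun s : Fin (t.castSucc).1 => (Fin.snoc r b : Fin (T+1) → Bool) ⟨s.1, s.2.trans t.castSucc.2⟩)
        = (fun s : Fin t.1 => r ⟨s.1, s.2.trans t.2⟩) := by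
      funext s
      exact Fin.snoc_castSucc (α := fun _ : Fin (T+1) => Bool) (p := r) (x := b) (i := ⟨s.1, s.2.trans t.2⟩)
    rw [h1, h2]
  · have h1 : (Fin.snoc r b : Fin (T+1) → Bool) (Fin.last T) = b := by simp
    have h2 : (fun s : Fin (Fin.last T).1 => (Fin.snoc r b : Fin (T+1) → Bool) ⟨s.1, s.2.trans (Fin.last T).2⟩) = r := by
      funext s
      exact Fin.snoc_castSucc (α := fun _ : Fin (T+1) => Bool) (p := r) (x := b) (i := ⟨s.1, s.2⟩)
    rw [h1, h2]

lemma sum_snoc {T : ℕ} (f : (Fin (T+1) → Bool) → ℝ) :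
    ∑ r' : Fin (T+1) → Bool, f r' = ∑ r : Fin T → Bool, ∑ b : Bool, f (Fin.snoc r b) := by
  rw [← (Fin.snocEquiv (fun _ => Bool)).sum_comp f]
  rw [Fintype.sum_prod_type]
  rw [Finset.sum_comm]
  rfl

end BanditLB

namespace BanditLB
open Finset Real

lemma sum_seqProb {K : ℕ} : ∀ (T : ℕ) (A : (t : Fin T) → (Fin t.1 → Bool) → Fin K)
    (μ : Fin K → ℝ), ∑ r : Fin T → Bool, seqProb A μ r = 1 := by
  intro T
  induction T with
  | zero =>
    intro A μ
    have : ∀ r : Fin 0 → Bool, seqProb A μ r = 1 := by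
      intro r; unfold seqProb; simp
    simp only [this]
    simp [Finset.card_univ]
  | succ T ih =>
    intro A μ
    rw [sum_snoc]
    have : ∀ r : Fin T → Bool, ∑ b : Bool, seqProb A μ (Fin.snoc r b)
        = seqProb (restrict A) μ r := by
      intro r
      simp only [seqProb_snoc]
      rw [Fintype.sum_bool]
      simp only [if_true, if_false, Bool.false_eq_true]
      ring
    simp only [this]
    exact ih _ μ

lemma seqProb_pos {K T : ℕ} (A : (t : Fin T) → (Fin t.1 → Bool) → Fin K)
    {μ : Fin K → ℝ} (h0 : ∀ i, 0 < μ i) (h1 : ∀ i, μ i < 1) (r : Fin T → Bool) :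
    0 < seqProb A μ r := by
  apply Finset.prod_pos
  intro t _
  split
  · exact h0 _
  · linarith [h1 (A t fun s => r ⟨s.1, s.2.trans t.2⟩)]

lemma instMu_pos {K : ℕ} (a : Fin K) {ε : ℝ} (hε0 : 0 < ε) (hε : ε < 1) (i : Fin K) :
    0 < instMu K a ε i ∧ instMu K a ε i < 1 := by
  unfold instMu; split <;> constructor <;> linarith

end BanditLB

namespace BanditLB
open Finset Real

section Generic
variable {ι : Type*} [Fintype ι] (p q : ι → ℝ)

lemma point_ineq {p q : ℝ} (hp : 0 ≤ p) (hq : 0 < q) :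
    p - Real.sqrt (p * q) ≤ 1 / 2 * (p * Real.log (p / q)) := by
  rcases eq_or_lt_of_le hp with h | hp0
  · simp [← h]
  · have hx : 0 < Real.sqrt (q / p) := Real.sqrt_pos.mpr (by positivity)
    have hlog := Real.log_le_sub_one_of_pos hx
    have hls : Real.log (Real.sqrt (q / p)) = 1 / 2 * Real.log (q / p) := by
      rw [Real.log_sqrt (by positivity)]; ring
    have hmul : p * Real.sqrt (q / p) = Real.sqrt (p * q) := by
      have e : p * q = p ^ 2 * (q / p) := by field_simp
      rw [e, Real.sqrt_mul (by positivity), Real.sqrt_sq hp]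
    have hinv : Real.log (q / p) = - Real.log (p / q) := by
      rw [← Real.log_inv]; congr 1; field_simp
    nlinarith [hlog, hls, hinv, mul_le_mul_of_nonneg_left hlog hp]

variable (hp : ∀ x, 0 ≤ p x) (hq : ∀ x, 0 < q x)
    (hp1 : ∑ x, p x = 1) (hq1 : ∑ x, q x = 1)

omit hq1 in
include hp hq hp1 in
lemma aff_ge : 1 - 1 / 2 * ∑ x, p x * Real.log (p x / q x)
    ≤ ∑ x, Real.sqrt (p x * q x) := by
  have h : ∀ x : ι, p x - Real.sqrt (p x * q x) ≤ 1 / 2 * (p x * Real.log (p x / q x)) :=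
    fun x => point_ineq (hp x) (hq x)
  have := Finset.sum_le_sum (fun x (_ : x ∈ Finset.univ) => h x)
  rw [Finset.sum_sub_distrib, hp1, ← Finset.mul_sum] at this
  linarith

include hp hq hp1 hq1 in
lemma aff_le_one : ∑ x, Real.sqrt (p x * q x) ≤ 1 := by
  have key : (∑ x, Real.sqrt (p x) * Real.sqrt (q x)) ^ 2
      ≤ (∑ x, Real.sqrt (p x) ^ 2) * ∑ x, Real.sqrt (q x) ^ 2 :=
    Finset.sum_mul_sq_le_sq_mul_sq _ _ _
  have e1 : ∑ x, Real.sqrt (p x) ^ 2 = 1 := by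
    rw [← hp1]; exact Finset.sum_congr rfl fun x _ => Real.sq_sqrt (hp x)
  have e2 : ∑ x, Real.sqrt (q x) ^ 2 = 1 := by
    rw [← hq1]; exact Finset.sum_congr rfl fun x _ => Real.sq_sqrt (hq x).le
  have e3 : ∑ x, Real.sqrt (p x * q x) = ∑ x, Real.sqrt (p x) * Real.sqrt (q x) :=
    Finset.sum_congr rfl fun x _ => Real.sqrt_mul (hp x) _
  have hnn : 0 ≤ ∑ x, Real.sqrt (p x) * Real.sqrt (q x) :=
    Finset.sum_nonneg fun x _ => mul_nonneg (Real.sqrt_nonneg _) (Real.sqrt_nonneg _)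
  rw [e3]
  nlinarith [key]

include hp hq hp1 hq1 in
lemma kl_nonneg : 0 ≤ ∑ x, p x * Real.log (p x / q x) := by
  have h1 := aff_ge p q hp hq hp1
  have h2 := aff_le_one p q hp hq hp1 hq1
  linarith

include hp hq hp1 hq1 in
lemma tv_le_sqrt_kl (E : Finset ι) :
    ∑ x ∈ E, q x - ∑ x ∈ E, p x ≤ 2 * Real.sqrt (∑ x, p x * Real.log (p x / q x)) := by
  set KL := ∑ x, p x * Real.log (p x / q x) with hKL
  set Aff := ∑ x, Real.sqrt (p x * q x) with hAff
  have haff1 : Aff ≤ 1 := aff_le_one p q hp hq hp1 hq1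
  have haff2 : 1 - 1/2 * KL ≤ Aff := aff_ge p q hp hq hp1
  -- first: difference on E bounded by L1 distance
  have hE : ∑ x ∈ E, q x - ∑ x ∈ E, p x ≤ ∑ x, |p x - q x| := by
    rw [← Finset.sum_sub_distrib]
    calc ∑ x ∈ E, (q x - p x) ≤ ∑ x ∈ E, |p x - q x| :=
          Finset.sum_le_sum fun x _ => by rw [abs_sub_comm]; exact le_abs_self _
      _ ≤ ∑ x, |p x - q x| :=
          Finset.sum_le_sum_of_subset_of_nonneg (Finset.subset_univ E)
            (fun x _ _ => abs_nonneg _)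
  -- L1 ≤ 2 sqrt(2 (1 - Aff)) ≤ 2 sqrt KL
  have hL1 : ∑ x, |p x - q x| ≤ 2 * Real.sqrt (2 * (1 - Aff)) := by
    have hfact : ∀ x : ι, |p x - q x|
        = |Real.sqrt (p x) - Real.sqrt (q x)| * (Real.sqrt (p x) + Real.sqrt (q x)) := by
      intro x
      rw [← abs_of_nonneg (show (0:ℝ) ≤ Real.sqrt (p x) + Real.sqrt (q x) by positivity),
        ← abs_mul]
      congr 1
      have := Real.sq_sqrt (hp x)
      have := Real.sq_sqrt (hq x).le
      nlinarith
    have key : (∑ x, |Real.sqrt (p x) - Real.sqrt (q x)| * (Real.sqrt (p x) + Real.sqrt (q x))) ^ 2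
        ≤ (∑ x, |Real.sqrt (p x) - Real.sqrt (q x)| ^ 2)
          * ∑ x, (Real.sqrt (p x) + Real.sqrt (q x)) ^ 2 :=
      Finset.sum_mul_sq_le_sq_mul_sq _ _ _
    have e1 : ∑ x, |Real.sqrt (p x) - Real.sqrt (q x)| ^ 2 = 2 - 2 * Aff := by
      have hx : ∀ x : ι, |Real.sqrt (p x) - Real.sqrt (q x)| ^ 2
          = (p x + q x) - 2 * Real.sqrt (p x * q x) := by
        intro x
        rw [sq_abs, Real.sqrt_mul (hp x)]
        have := Real.sq_sqrt (hp x)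
        have := Real.sq_sqrt (hq x).le
        nlinarith
      rw [Finset.sum_congr rfl fun x _ => hx x, Finset.sum_sub_distrib,
        Finset.sum_add_distrib, hp1, hq1, ← Finset.mul_sum, ← hAff]
      norm_num
    have e2 : ∑ x, (Real.sqrt (p x) + Real.sqrt (q x)) ^ 2 ≤ 4 := by
      have : ∀ x : ι, (Real.sqrt (p x) + Real.sqrt (q x)) ^ 2
          = (p x + q x) + 2 * Real.sqrt (p x * q x) := by
        intro x
        rw [Real.sqrt_mul (hp x)]
        have := Real.sq_sqrt (hp x)
        have := Real.sq_sqrt (hq x).le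
        nlinarith
      rw [Finset.sum_congr rfl fun x _ => this x, Finset.sum_add_distrib,
        Finset.sum_add_distrib, hp1, hq1, ← Finset.mul_sum, ← hAff]
      linarith
    have hnn : 0 ≤ ∑ x, |Real.sqrt (p x) - Real.sqrt (q x)| * (Real.sqrt (p x) + Real.sqrt (q x)) :=
      Finset.sum_nonneg fun x _ => mul_nonneg (abs_nonneg _) (by positivity)
    calc ∑ x, |p x - q x|
        = ∑ x, |Real.sqrt (p x) - Real.sqrt (q x)| * (Real.sqrt (p x) + Real.sqrt (q x)) :=
          Finset.sum_congr rfl fun x _ => hfact x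
      _ ≤ Real.sqrt ((2 - 2*Aff) * 4) := by
          rw [← Real.sqrt_sq hnn]
          apply Real.sqrt_le_sqrt
          calc _ ≤ (∑ x, |Real.sqrt (p x) - Real.sqrt (q x)| ^ 2)
              * ∑ x, (Real.sqrt (p x) + Real.sqrt (q x)) ^ 2 := key
            _ ≤ (2 - 2*Aff) * 4 := by
                apply mul_le_mul (le_of_eq e1) e2
                · exact Finset.sum_nonneg fun x _ => sq_nonneg _
                · linarith
      _ = 2 * Real.sqrt (2 * (1 - Aff)) := by
          rw [show (2 - 2*Aff) * 4 = 2^2 * (2 * (1-Aff)) by ring, Real.sqrt_mul (by positivity),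
            Real.sqrt_sq (by norm_num)]
  have hfin : 2 * Real.sqrt (2 * (1 - Aff)) ≤ 2 * Real.sqrt KL := by
    have : 2 * (1 - Aff) ≤ KL := by linarith
    exact mul_le_mul_of_nonneg_left (Real.sqrt_le_sqrt this) (by norm_num)
  linarith

end Generic
end BanditLB

namespace BanditLB
open Finset Real

noncomputable def halfMu (K : ℕ) : Fin K → ℝ := fun _ => 1/2

lemma kl_chain {K : ℕ} {ε : ℝ} (hε0 : 0 < ε) (hε : ε < 1/2) :
    ∀ (T : ℕ) (A : (t : Fin T) → (Fin t.1 → Bool) → Fin K),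
    ∑ a : Fin K, ∑ r : Fin T → Bool,
      seqProb A (halfMu K) r *
        Real.log (seqProb A (halfMu K) r / seqProb A (instMu K a ε) r)
      = T * (-(1/2) * Real.log (1 - ε^2)) := by
  intro T
  induction T with
  | zero =>
      intro A
      have h : ∀ (μ : Fin K → ℝ) (r : Fin 0 → Bool), seqProb A μ r = 1 := by
        intro μ r; unfold seqProb; simp
      simp [h]
  | succ T ih =>
      intro A
      set kl0 : ℝ := -(1/2) * Real.log (1 - ε^2) with hkl0
      have hε1 : ε < 1 := by linarith
      have hP0pos : ∀ r, 0 < seqProb (restrict A) (halfMu K) r :=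
        seqProb_pos _ (fun i => by norm_num [halfMu]) (fun i => by norm_num [halfMu])
      have hPapos : ∀ (a : Fin K) r, 0 < seqProb (restrict A) (instMu K a ε) r :=
        fun a => seqProb_pos _ (fun i => (instMu_pos a hε0 hε1 i).1)
          (fun i => (instMu_pos a hε0 hε1 i).2)
      have key : ∀ (a : Fin K) (r : Fin T → Bool),
          ∑ b : Bool, seqProb A (halfMu K) (Fin.snoc r b) *
            Real.log (seqProb A (halfMu K) (Fin.snoc r b)
              / seqProb A (instMu K a ε) (Fin.snoc r b))
          = seqProb (restrict A) (halfMu K) r *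
              Real.log (seqProb (restrict A) (halfMu K) r
                / seqProb (restrict A) (instMu K a ε) r)
            + seqProb (restrict A) (halfMu K) r *
              (if A (Fin.last T) r = a then kl0 else 0) := by
        intro a r
        rw [Fintype.sum_bool]
        rw [seqProb_snoc A (halfMu K) r true, seqProb_snoc A (halfMu K) r false,
          seqProb_snoc A (instMu K a ε) r true, seqProb_snoc A (instMu K a ε) r false]
        simp only [if_true, if_false, Bool.false_eq_true]
        set p := seqProb (restrict A) (halfMu K) r with hp
        set qa := seqProb (restrict A) (instMu K a ε) r with hqa
        set m := instMu K a ε (A (Fin.last T) r) with hm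
        have hh : halfMu K (A (Fin.last T) r) = 1/2 := rfl
        rw [hh]
        have hm0 : 0 < m := (instMu_pos a hε0 hε1 _).1
        have hm1 : m < 1 := (instMu_pos a hε0 hε1 _).2
        have hp0 := hP0pos r
        have hq0 := hPapos a r
        have e1 : (p * (1/2)) / (qa * m) = (p / qa) * ((1/2) / m) := by
          rw [div_mul_div_comm]
        have e2 : (p * (1 - 1/2)) / (qa * (1 - m)) = (p / qa) * ((1/2) / (1 - m)) := by
          rw [show (1 : ℝ) - 1/2 = 1/2 by norm_num]
          rw [div_mul_div_comm]
        rw [e1, e2,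
          Real.log_mul (ne_of_gt (div_pos hp0 hq0)) (ne_of_gt (div_pos (by norm_num) hm0)),
          Real.log_mul (ne_of_gt (div_pos hp0 hq0))
            (ne_of_gt (div_pos (by norm_num) (by linarith)))]
        have main : (1/2) * (Real.log ((1/2) / m) + Real.log ((1/2) / (1 - m)))
            = (if A (Fin.last T) r = a then kl0 else 0) := by
          by_cases hcase : A (Fin.last T) r = a
          · rw [if_pos hcase]
            have hmval : m = (1 + ε) / 2 := by rw [hm]; unfold instMu; rw [if_pos hcase]
            have l1 : (1/2 : ℝ) / m = (1 + ε)⁻¹ := by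
              rw [hmval]; field_simp
            have l2 : (1/2 : ℝ) / (1 - m) = (1 - ε)⁻¹ := by
              rw [hmval]; rw [show (1:ℝ) - (1+ε)/2 = (1-ε)/2 by ring]; field_simp
            rw [l1, l2, Real.log_inv, Real.log_inv, hkl0,
              show -Real.log (1+ε) + -Real.log (1-ε) = -(Real.log (1+ε) + Real.log (1-ε)) by ring,
              ← Real.log_mul (by linarith) (by linarith),
              show (1+ε) * (1-ε) = 1 - ε^2 by ring]
            ring
          · rw [if_neg hcase]
            have hmval : m = 1/2 := by rw [hm]; unfold instMu; rw [if_neg hcase]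
            rw [hmval]
            norm_num
        nlinarith [main]
      calc ∑ a : Fin K, ∑ r : Fin (T+1) → Bool,
            seqProb A (halfMu K) r *
              Real.log (seqProb A (halfMu K) r / seqProb A (instMu K a ε) r)
          = ∑ a : Fin K, ∑ r : Fin T → Bool,
              (seqProb (restrict A) (halfMu K) r *
                Real.log (seqProb (restrict A) (halfMu K) r
                  / seqProb (restrict A) (instMu K a ε) r)
              + seqProb (restrict A) (halfMu K) r *
                (if A (Fin.last T) r = a then kl0 else 0)) := by
            apply Finset.sum_congr rfl
            intro a _
            rw [sum_snoc]
            exact Finset.sum_congr rfl fun r _ => key a r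
        _ = (T : ℝ) * kl0 + ∑ a : Fin K, ∑ r : Fin T → Bool,
              seqProb (restrict A) (halfMu K) r *
                (if A (Fin.last T) r = a then kl0 else 0) := by
            rw [← ih (restrict A)]
            rw [← Finset.sum_add_distrib]
            apply Finset.sum_congr rfl
            intro a _
            rw [← Finset.sum_add_distrib]
        _ = (T : ℝ) * kl0 + kl0 := by
            congr 1
            rw [Finset.sum_comm]
            have : ∀ r : Fin T → Bool,
                ∑ a : Fin K, seqProb (restrict A) (halfMu K) r *
                  (if A (Fin.last T) r = a then kl0 else 0)
                = seqProb (restrict A) (halfMu K) r * kl0 := by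
              intro r
              rw [← Finset.mul_sum]
              congr 1
              rw [Finset.sum_ite_eq]
              simp
            rw [Finset.sum_congr rfl fun r _ => this r, ← Finset.sum_mul,
              sum_seqProb T (restrict A) (halfMu K), one_mul]
        _ = ((T : ℕ) + 1 : ℝ) * kl0 := by ring
        _ = ((T + 1 : ℕ) : ℝ) * kl0 := by push_cast; ring

end BanditLB

namespace BanditLB
open Finset Real

lemma kl0_le {ε : ℝ} (hε0 : 0 < ε) (hε : ε < 1/2) :
    0 ≤ -(1/2) * Real.log (1 - ε^2) ∧ -(1/2) * Real.log (1 - ε^2) ≤ (2/3) * ε^2 := by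
  have hpos : (0:ℝ) < 1 - ε^2 := by nlinarith
  constructor
  · have : Real.log (1 - ε^2) ≤ 0 := Real.log_nonpos (by linarith) (by nlinarith)
    linarith
  · have h1 := Real.log_le_sub_one_of_pos (inv_pos.mpr hpos)
    rw [Real.log_inv] at h1
    have hmul : (1 - ε^2) * (1 - ε^2)⁻¹ = 1 := mul_inv_cancel₀ (ne_of_gt hpos)
    have hub : (1 - ε^2)⁻¹ ≤ 4/3 := by nlinarith [inv_pos.mpr hpos]
    nlinarith [inv_pos.mpr hpos]

lemma det_bound {K T : ℕ} (hK : 2 ≤ K) {ε : ℝ} (hε0 : 0 < ε) (hε : ε < 1/2)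
    (hT : (T : ℝ) ≤ (3/128) * K / ε ^ 2) (alg : DetAlgPred K T) :
    (1/4 : ℝ) ≤ (K : ℝ)⁻¹ * ∑ a : Fin K,
      ∑ r ∈ Finset.univ.filter (fun r : Fin T → Bool => alg.2 r ≠ a),
        seqProb alg.1 (instMu K a ε) r := by
  have hε1 : ε < 1 := by linarith
  set kl0 : ℝ := -(1/2) * Real.log (1 - ε^2) with hkl0
  obtain ⟨hkl0nn, hkl0le⟩ := kl0_le hε0 hε
  set P0 : (Fin T → Bool) → ℝ := seqProb alg.1 (halfMu K) with hP0
  set Pa : Fin K → (Fin T → Bool) → ℝ := fun a => seqProb alg.1 (instMu K a ε) with hPa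
  have hP0pos : ∀ r, 0 < P0 r :=
    seqProb_pos _ (fun i => by norm_num [halfMu]) (fun i => by norm_num [halfMu])
  have hPapos : ∀ a r, 0 < Pa a r :=
    fun a => seqProb_pos _ (fun i => (instMu_pos a hε0 hε1 i).1)
      (fun i => (instMu_pos a hε0 hε1 i).2)
  have hP0sum : ∑ r, P0 r = 1 := sum_seqProb T alg.1 (halfMu K)
  have hPasum : ∀ a, ∑ r, Pa a r = 1 := fun a => sum_seqProb T alg.1 (instMu K a ε)
  set KL : Fin K → ℝ := fun a => ∑ r, P0 r * Real.log (P0 r / Pa a r) with hKL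
  have hKLnn : ∀ a, 0 ≤ KL a := fun a =>
    kl_nonneg P0 (Pa a) (fun r => (hP0pos r).le) (hPapos a) hP0sum (hPasum a)
  have hKLsum : ∑ a, KL a = T * kl0 := kl_chain hε0 hε T alg.1
  -- correct-prob bound per arm
  have hcorrect : ∀ a : Fin K,
      ∑ r ∈ Finset.univ.filter (fun r : Fin T → Bool => alg.2 r = a), Pa a r
      ≤ ∑ r ∈ Finset.univ.filter (fun r : Fin T → Bool => alg.2 r = a), P0 r
        + 2 * Real.sqrt (KL a) := by
    intro a
    have := tv_le_sqrt_kl P0 (Pa a) (fun r => (hP0pos r).le) (hPapos a) hP0sum (hPasum a)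
      (Finset.univ.filter (fun r : Fin T → Bool => alg.2 r = a))
    linarith
  -- sum over arms of P0-mass of fibers is 1
  have hfiber : ∑ a : Fin K,
      ∑ r ∈ Finset.univ.filter (fun r : Fin T → Bool => alg.2 r = a), P0 r = 1 := by
    have : ∀ a : Fin K, ∑ r ∈ Finset.univ.filter (fun r : Fin T → Bool => alg.2 r = a), P0 r
        = ∑ r : Fin T → Bool, if alg.2 r = a then P0 r else 0 :=
      fun a => Finset.sum_filter _ _
    rw [Finset.sum_congr rfl fun a _ => this a, Finset.sum_comm]
    rw [← hP0sum]
    apply Finset.sum_congr rfl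
    intro r _
    rw [Finset.sum_ite_eq]
    simp
  -- Cauchy-Schwarz over arms
  have hCS : ∑ a : Fin K, 2 * Real.sqrt (KL a) ≤ 2 * Real.sqrt (K * (T * kl0)) := by
    rw [← Finset.mul_sum]
    have key : (∑ a : Fin K, Real.sqrt (KL a)) ^ 2 ≤ (K : ℝ) * ∑ a, KL a := by
      have h1 := sq_sum_le_card_mul_sum_sq (s := Finset.univ) (f := fun a : Fin K => Real.sqrt (KL a))
      have h2 : ∑ a : Fin K, Real.sqrt (KL a) ^ 2 = ∑ a, KL a :=
        Finset.sum_congr rfl fun a _ => Real.sq_sqrt (hKLnn a)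
      simpa [h2, Finset.card_univ] using h1
    have hnn : 0 ≤ ∑ a : Fin K, Real.sqrt (KL a) :=
      Finset.sum_nonneg fun a _ => Real.sqrt_nonneg _
    have : ∑ a : Fin K, Real.sqrt (KL a) ≤ Real.sqrt ((K : ℝ) * (T * kl0)) := by
      rw [← Real.sqrt_sq hnn]
      apply Real.sqrt_le_sqrt
      rw [← hKLsum]
      exact key
    linarith
  -- numeric bound on K * (T * kl0)
  have hnum : (K : ℝ) * (T * kl0) ≤ (K : ℝ)^2 / 64 := by
    have hKpos : (0:ℝ) < K := by positivity
    have hT0 : (0:ℝ) ≤ T := by positivity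
    have h1 : (T : ℝ) * kl0 ≤ ((3/128) * K / ε^2) * ((2/3) * ε^2) := by
      apply mul_le_mul hT hkl0le hkl0nn
      positivity
    have h2 : ((3/128) * (K:ℝ) / ε^2) * ((2/3) * ε^2) = (K : ℝ) / 64 := by
      field_simp
      ring
    rw [h2] at h1
    calc (K : ℝ) * (T * kl0) ≤ (K : ℝ) * ((K:ℝ)/64) :=
          mul_le_mul_of_nonneg_left h1 hKpos.le
      _ = (K : ℝ)^2/64 := by ring
  have hsqrtnum : 2 * Real.sqrt ((K:ℝ) * (T * kl0)) ≤ (K : ℝ) / 4 := by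
    have hKpos : (0:ℝ) < K := by positivity
    have : Real.sqrt ((K:ℝ) * (T * kl0)) ≤ Real.sqrt ((K:ℝ)^2/64) := Real.sqrt_le_sqrt hnum
    have he : Real.sqrt ((K:ℝ)^2/64) = (K:ℝ)/8 := by
      rw [show (K:ℝ)^2/64 = ((K:ℝ)/8)^2 by ring, Real.sqrt_sq (by positivity)]
    rw [he] at this
    linarith
  -- error sum lower bound
  have herr : ∀ a : Fin K,
      ∑ r ∈ Finset.univ.filter (fun r : Fin T → Bool => alg.2 r ≠ a), Pa a r
      = 1 - ∑ r ∈ Finset.univ.filter (fun r : Fin T → Bool => alg.2 r = a), Pa a r := by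
    intro a
    have := Finset.sum_filter_add_sum_filter_not Finset.univ
      (fun r : Fin T → Bool => alg.2 r = a) (Pa a)
    rw [hPasum a] at this
    have h2 : Finset.univ.filter (fun r : Fin T → Bool => ¬ alg.2 r = a)
        = Finset.univ.filter (fun r : Fin T → Bool => alg.2 r ≠ a) := rfl
    linarith [this]
  have hmain : ((K : ℝ)/4) ≤ ∑ a : Fin K,
      ∑ r ∈ Finset.univ.filter (fun r : Fin T → Bool => alg.2 r ≠ a), Pa a r := by
    rw [Finset.sum_congr rfl fun a _ => herr a]
    rw [Finset.sum_sub_distrib]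
    have hbound : ∑ a : Fin K,
        ∑ r ∈ Finset.univ.filter (fun r : Fin T → Bool => alg.2 r = a), Pa a r
        ≤ 1 + (K:ℝ)/4 := by
      calc ∑ a : Fin K, ∑ r ∈ Finset.univ.filter (fun r : Fin T → Bool => alg.2 r = a), Pa a r
          ≤ ∑ a : Fin K, (∑ r ∈ Finset.univ.filter (fun r : Fin T → Bool => alg.2 r = a), P0 r
              + 2 * Real.sqrt (KL a)) := Finset.sum_le_sum fun a _ => hcorrect a
        _ = 1 + ∑ a : Fin K, 2 * Real.sqrt (KL a) := by
            rw [Finset.sum_add_distrib, hfiber]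
        _ ≤ 1 + (K:ℝ)/4 := by linarith [hCS, hsqrtnum]
    have hcard : ∑ _a : Fin K, (1:ℝ) = K := by simp
    have hK2 : (2:ℝ) ≤ K := by exact_mod_cast hK
    rw [hcard]
    linarith
  have hKpos : (0:ℝ) < K := by positivity
  calc (1/4 : ℝ) = (K:ℝ)⁻¹ * ((K:ℝ)/4) := by field_simp
    _ ≤ _ := mul_le_mul_of_nonneg_left hmain (by positivity)

end BanditLB


/-- **Best-arm identification fails on a random instance.**
There is an absolute constant `c > 0` such that for every `K ≥ 2`, `ε ∈ (0,1/2)`,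
time horizon `T ≤ cK/ε²`, and randomized bandit algorithm with prediction
(a distribution `π` over deterministic algorithms with prediction), if an arm `a`
is drawn uniformly from `[K]` and the algorithm is run on instance `I_a(ε)`, then
`Pr[prediction ≠ a] ≥ 1/12` (over the arm, the rewards, and the randomization). -/
theorem randomized_bestarm_lower_bound :
    ∃ c > (0 : ℝ), ∀ (K T : ℕ), 2 ≤ K → ∀ ε : ℝ, 0 < ε → ε < 1 / 2 →
      (T : ℝ) ≤ c * K / ε ^ 2 →
      ∀ π : DetAlgPred K T → ℝ,
        (∀ alg, 0 ≤ π alg) → (∑ alg, π alg) = 1 →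
        (1 / 12 : ℝ) ≤ (K : ℝ)⁻¹ * ∑ a : Fin K, ∑ alg : DetAlgPred K T, π alg *
          ∑ r ∈ Finset.univ.filter (fun r : Fin T → Bool => alg.2 r ≠ a),
            seqProb alg.1 (instMu K a ε) r := by
  refine ⟨3/128, by norm_num, ?_⟩
  intro K T hK ε hε0 hε hT π hπ0 hπ1
  set X : Fin K → DetAlgPred K T → ℝ := fun a alg =>
    ∑ r ∈ Finset.univ.filter (fun r : Fin T → Bool => alg.2 r ≠ a),
      seqProb alg.1 (instMu K a ε) r with hX
  have hdet : ∀ alg : DetAlgPred K T, (1/4 : ℝ) ≤ (K : ℝ)⁻¹ * ∑ a : Fin K, X a alg :=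
    fun alg => BanditLB.det_bound hK hε0 hε hT alg
  calc (1/12 : ℝ) = ∑ alg : DetAlgPred K T, π alg * (1/12) := by
        rw [← Finset.sum_mul, hπ1, one_mul]
    _ ≤ ∑ alg : DetAlgPred K T, π alg * ((K : ℝ)⁻¹ * ∑ a : Fin K, X a alg) :=
        Finset.sum_le_sum fun alg _ =>
          mul_le_mul_of_nonneg_left (le_trans (by norm_num) (hdet alg)) (hπ0 alg)
    _ = (K : ℝ)⁻¹ * ∑ a : Fin K, ∑ alg : DetAlgPred K T, π alg * X a alg := by
        rw [Finset.sum_comm, Finset.mul_sum]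
        apply Finset.sum_congr rfl
        intro alg _
        rw [Finset.mul_sum, Finset.mul_sum, Finset.mul_sum]
        exact Finset.sum_congr rfl fun a _ => by ring
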